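/- For every b > 0, the function k ↦ κ^{b,k} := -2(E(k) + √(1-k²)·K(k)) / (π b (1 + √(1-k²))) is strictly increasing on the open interval (0,1). In particular, for every b > 0 and k ∈ (0,1) the derivative ∂_k κ^{b,k} is nonzero. -/

import Mathlib

open Real

/-- Complete elliptic integral of the first kind. -/
noncomputable def ellK (k : ℝ) : ℝ :=
  ∫ u in (0:ℝ)..(π/2), 1 / Real.sqrt (1 - k^2 * Real.sin u ^ 2)

/-- Complete elliptic integral of the second kind. -/
noncomputable def ellE (k : ℝ) : ℝ :=
  ∫ u in (0:ℝ)..(π/2), Real.sqrt (1 - k^2 * Real.sin u ^ 2)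

/-- The constant mean curvature of the unduloid with size parameter `b` and
shape parameter `k`. -/
noncomputable def kappa (b k : ℝ) : ℝ :=
  -2 * (ellE k + Real.sqrt (1 - k^2) * ellK k) / (π * b * (1 + Real.sqrt (1 - k^2)))

open intervalIntegral MeasureTheory

lemma aux_pos {x : ℝ} (u : ℝ) (hx : |x| < 1) : 0 < 1 - x^2 * Real.sin u ^ 2 := by
  have h1 : x^2 < 1 := by nlinarith [abs_nonneg x, sq_abs x]
  nlinarith [Real.sin_sq_le_one u, sq_nonneg x, sq_nonneg (Real.sin u)]

lemma ballm {k : ℝ} (hk0 : 0 < k) :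
    ∀ x ∈ Metric.ball k ((1-k)/2), |x| < (1+k)/2 := by
  intro x hx
  rw [Metric.mem_ball, Real.dist_eq] at hx
  obtain ⟨h1, h2⟩ := abs_lt.mp hx
  rw [abs_lt]; constructor <;> linarith

lemma intE {x : ℝ} :
    IntervalIntegrable (fun u => Real.sqrt (1 - x^2 * Real.sin u ^ 2)) volume 0 (π/2) :=
  (Continuous.sqrt (by fun_prop)).intervalIntegrable 0 (π/2)

lemma intK {x : ℝ} (hx : |x| < 1) :
    IntervalIntegrable (fun u => 1 / Real.sqrt (1 - x^2 * Real.sin u ^ 2)) volume 0 (π/2) := by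
  apply Continuous.intervalIntegrable
  apply Continuous.div continuous_const (Continuous.sqrt (by fun_prop))
  intro u; exact (Real.sqrt_pos.2 (aux_pos u hx)).ne'

lemma hasDerivAt_ellE {k : ℝ} (hk0 : 0 < k) (hk1 : k < 1) :
    HasDerivAt ellE ((ellE k - ellK k) / k) k := by
  set m : ℝ := (1+k)/2 with hmdef
  have hm1 : m < 1 := by rw [hmdef]; linarith
  have hm0 : 0 < m := by rw [hmdef]; linarith
  have hkm : |k| < m := by rw [abs_of_pos hk0, hmdef]; linarith
  have hk1' : |k| < 1 := lt_trans hkm hm1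
  have hmm : 0 < 1 - m^2 := by nlinarith
  have h1 : ∀ᶠ x in nhds k, AEStronglyMeasurable
      (fun u => Real.sqrt (1 - x^2 * Real.sin u ^ 2)) (volume.restrict (Set.uIoc 0 (π/2))) := by
    filter_upwards with x
    exact (Continuous.sqrt (by fun_prop)).aestronglyMeasurable
  have h3 : AEStronglyMeasurable
      (fun u => -(k * Real.sin u ^ 2) / Real.sqrt (1 - k^2 * Real.sin u ^ 2))
      (volume.restrict (Set.uIoc 0 (π/2))) := by
    apply Continuous.aestronglyMeasurable
    apply Continuous.div (by fun_prop) (Continuous.sqrt (by fun_prop))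
    intro u
    exact (Real.sqrt_pos.2 (aux_pos u hk1')).ne'
  have h4 : ∀ᵐ u ∂(volume : Measure ℝ), u ∈ Set.uIoc 0 (π/2) →
      ∀ x ∈ Metric.ball k ((1-k)/2),
        ‖-(x * Real.sin u ^ 2) / Real.sqrt (1 - x^2 * Real.sin u ^ 2)‖ ≤ m / Real.sqrt (1 - m^2) := by
    filter_upwards with u _ x hx
    have hxm := ballm hk0 x hx
    have hx1 : |x| < 1 := lt_trans hxm hm1
    have hpos := aux_pos u hx1
    have hs : Real.sin u ^ 2 ≤ 1 := Real.sin_sq_le_one u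
    have h2 : Real.sqrt (1 - m^2) ≤ Real.sqrt (1 - x^2 * Real.sin u ^ 2) := by
      apply Real.sqrt_le_sqrt
      nlinarith [sq_abs x, sq_nonneg (Real.sin u), abs_nonneg x]
    have h3 : 0 < Real.sqrt (1 - m^2) := Real.sqrt_pos.2 hmm
    rw [norm_div, Real.norm_eq_abs, Real.norm_eq_abs,
      abs_of_pos (Real.sqrt_pos.2 hpos)]
    apply div_le_div₀ hm0.le ?_ h3 h2
    calc |(-(x * Real.sin u ^ 2))| = |x| * Real.sin u ^ 2 := by
          rw [abs_neg, abs_mul, abs_of_nonneg (sq_nonneg (Real.sin u))]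
      _ ≤ m * 1 := mul_le_mul hxm.le hs (sq_nonneg _) hm0.le
      _ = m := mul_one m
  have h5 : IntervalIntegrable (fun _ : ℝ => m / Real.sqrt (1 - m^2)) volume 0 (π/2) :=
    intervalIntegrable_const
  have h6 : ∀ᵐ u ∂(volume : Measure ℝ), u ∈ Set.uIoc 0 (π/2) →
      ∀ x ∈ Metric.ball k ((1-k)/2),
        HasDerivAt (fun x => Real.sqrt (1 - x^2 * Real.sin u ^ 2))
          (-(x * Real.sin u ^ 2) / Real.sqrt (1 - x^2 * Real.sin u ^ 2)) x := by
    filter_upwards with u _ x hx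
    have hxm := ballm hk0 x hx
    have hx1 : |x| < 1 := lt_trans hxm hm1
    have hpos := aux_pos u hx1
    have hd : HasDerivAt (fun x : ℝ => 1 - x^2 * Real.sin u ^ 2)
        (-(2 * x ^ 1 * Real.sin u ^ 2)) x :=
      ((hasDerivAt_pow 2 x).mul_const (Real.sin u ^ 2)).const_sub 1
    have h2 := hd.sqrt hpos.ne'
    convert h2 using 1
    have hne : Real.sqrt (1 - x^2 * Real.sin u ^ 2) ≠ 0 := (Real.sqrt_pos.2 hpos).ne'
    field_simp
  have key := (intervalIntegral.hasDerivAt_integral_of_dominated_loc_of_deriv_le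
    (F := fun x u => Real.sqrt (1 - x^2 * Real.sin u ^ 2))
    (F' := fun x u => -(x * Real.sin u ^ 2) / Real.sqrt (1 - x^2 * Real.sin u ^ 2))
    (x₀ := k) (a := 0) (b := π/2) (μ := volume)
    (bound := fun _ => m / Real.sqrt (1 - m^2))
    (s := Metric.ball k ((1-k)/2)) (Metric.ball_mem_nhds k (by linarith)) h1 intE h3 h4 h5 h6).2
  have heq : (∫ u in (0:ℝ)..(π/2), -(k * Real.sin u ^ 2) / Real.sqrt (1 - k^2 * Real.sin u ^ 2))
      = (ellE k - ellK k) / k := by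
    have hcong : ∀ u ∈ Set.uIcc (0:ℝ) (π/2),
        -(k * Real.sin u ^ 2) / Real.sqrt (1 - k^2 * Real.sin u ^ 2)
        = (Real.sqrt (1 - k^2 * Real.sin u ^ 2) - 1 / Real.sqrt (1 - k^2 * Real.sin u ^ 2)) / k := by
      intro u _
      have hpos := aux_pos u hk1'
      have hne : Real.sqrt (1 - k^2 * Real.sin u ^ 2) ≠ 0 := (Real.sqrt_pos.2 hpos).ne'
      have hsq : Real.sqrt (1 - k^2 * Real.sin u ^ 2) * Real.sqrt (1 - k^2 * Real.sin u ^ 2)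
          = 1 - k^2 * Real.sin u ^ 2 := Real.mul_self_sqrt hpos.le
      field_simp
      nlinarith [hsq]
    rw [intervalIntegral.integral_congr hcong, intervalIntegral.integral_div,
      intervalIntegral.integral_sub intE (intK hk1')]
    rfl
  rw [← heq]
  exact key

lemma phi_identity {k s c w : ℝ} (hk0 : k ≠ 0) (hk2 : (1:ℝ) - k^2 ≠ 0) (hw0 : w ≠ 0)
    (hw : w * w = 1 - k^2 * s^2) (hc : s^2 + c^2 = 1) :
    k * s ^ 2 / w ^ 3 - (w - (1 - k ^ 2) * (1 / w)) / (k * (1 - k ^ 2))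
      = -(k / (1 - k ^ 2)) * (((c * c + s * -s) * w - s * c * (-(k ^ 2 * (2 * s ^ 1 * c)) / (2 * w))) / w ^ 2) := by
  field_simp
  linear_combination (-w^2 - k^2*s^2) * hw + (k^2*w^2 + k^4*s^2) * hc

lemma phi_hasDeriv {k : ℝ} (hk0 : 0 < k) (hk1 : |k| < 1) (u : ℝ) :
    HasDerivAt (fun u => -(k/(1-k^2)) * (Real.sin u * Real.cos u / Real.sqrt (1 - k^2 * Real.sin u ^ 2)))
      (k * Real.sin u ^ 2 / (Real.sqrt (1 - k^2 * Real.sin u ^ 2))^3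
        - (Real.sqrt (1 - k^2 * Real.sin u ^ 2) - (1-k^2) * (1 / Real.sqrt (1 - k^2 * Real.sin u ^ 2)))
          / (k * (1-k^2))) u := by
  have hpos := aux_pos u hk1
  have hk2 : (0:ℝ) < 1 - k^2 := by nlinarith [sq_abs k, abs_nonneg k]
  have hne : Real.sqrt (1 - k^2 * Real.sin u ^ 2) ≠ 0 := (Real.sqrt_pos.2 hpos).ne'
  have hsq : Real.sqrt (1 - k^2 * Real.sin u ^ 2) * Real.sqrt (1 - k^2 * Real.sin u ^ 2)
      = 1 - k^2 * Real.sin u ^ 2 := Real.mul_self_sqrt hpos.le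
  have hsc : HasDerivAt (fun u => Real.sin u * Real.cos u)
      (Real.cos u * Real.cos u + Real.sin u * -Real.sin u) u :=
    (Real.hasDerivAt_sin u).mul (Real.hasDerivAt_cos u)
  have hin : HasDerivAt (fun u => 1 - k^2 * Real.sin u ^ 2)
      (-(k^2 * (2 * Real.sin u ^ 1 * Real.cos u))) u :=
    (((Real.hasDerivAt_sin u).pow 2).const_mul (k^2)).const_sub 1
  have hsqrt := hin.sqrt hpos.ne'
  have hdiv := hsc.div hsqrt hne
  have h := hdiv.const_mul (-(k/(1-k^2)))
  refine h.congr_deriv ?_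
  exact (phi_identity hk0.ne' hk2.ne' hne hsq (Real.sin_sq_add_cos_sq u)).symm

lemma hasDerivAt_ellK {k : ℝ} (hk0 : 0 < k) (hk1 : k < 1) :
    HasDerivAt ellK ((ellE k - (1-k^2) * ellK k) / (k * (1-k^2))) k := by
  set m : ℝ := (1+k)/2 with hmdef
  have hm1 : m < 1 := by rw [hmdef]; linarith
  have hm0 : 0 < m := by rw [hmdef]; linarith
  have hkm : |k| < m := by rw [abs_of_pos hk0, hmdef]; linarith
  have hk1' : |k| < 1 := lt_trans hkm hm1
  have hmm : 0 < 1 - m^2 := by nlinarith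
  have hk2 : (0:ℝ) < 1 - k^2 := by nlinarith [sq_abs k, abs_nonneg k]
  have h1 : ∀ᶠ x in nhds k, AEStronglyMeasurable
      (fun u => 1 / Real.sqrt (1 - x^2 * Real.sin u ^ 2)) (volume.restrict (Set.uIoc 0 (π/2))) := by
    filter_upwards with x
    exact Measurable.aestronglyMeasurable (by fun_prop)
  have h3 : AEStronglyMeasurable
      (fun u => k * Real.sin u ^ 2 / (Real.sqrt (1 - k^2 * Real.sin u ^ 2))^3)
      (volume.restrict (Set.uIoc 0 (π/2))) := by
    apply Continuous.aestronglyMeasurable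
    apply Continuous.div (by fun_prop) (by fun_prop)
    intro u
    exact pow_ne_zero 3 (Real.sqrt_pos.2 (aux_pos u hk1')).ne'
  have h4 : ∀ᵐ u ∂(volume : Measure ℝ), u ∈ Set.uIoc 0 (π/2) →
      ∀ x ∈ Metric.ball k ((1-k)/2),
        ‖x * Real.sin u ^ 2 / (Real.sqrt (1 - x^2 * Real.sin u ^ 2))^3‖
          ≤ m / (Real.sqrt (1 - m^2))^3 := by
    filter_upwards with u _ x hx
    have hxm := ballm hk0 x hx
    have hx1 : |x| < 1 := lt_trans hxm hm1
    have hpos := aux_pos u hx1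
    have hs : Real.sin u ^ 2 ≤ 1 := Real.sin_sq_le_one u
    have h2 : Real.sqrt (1 - m^2) ≤ Real.sqrt (1 - x^2 * Real.sin u ^ 2) := by
      apply Real.sqrt_le_sqrt
      nlinarith [sq_abs x, sq_nonneg (Real.sin u), abs_nonneg x]
    have h3' : 0 < Real.sqrt (1 - m^2) := Real.sqrt_pos.2 hmm
    rw [norm_div, Real.norm_eq_abs, Real.norm_eq_abs,
      abs_of_pos (pow_pos (Real.sqrt_pos.2 hpos) 3)]
    apply div_le_div₀ hm0.le ?_ (pow_pos h3' 3) (pow_le_pow_left₀ h3'.le h2 3)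
    calc |x * Real.sin u ^ 2| = |x| * Real.sin u ^ 2 := by
          rw [abs_mul, abs_of_nonneg (sq_nonneg (Real.sin u))]
      _ ≤ m * 1 := mul_le_mul hxm.le hs (sq_nonneg _) hm0.le
      _ = m := mul_one m
  have h5 : IntervalIntegrable (fun _ : ℝ => m / (Real.sqrt (1 - m^2))^3) volume 0 (π/2) :=
    intervalIntegrable_const
  have h6 : ∀ᵐ u ∂(volume : Measure ℝ), u ∈ Set.uIoc 0 (π/2) →
      ∀ x ∈ Metric.ball k ((1-k)/2),
        HasDerivAt (fun x => 1 / Real.sqrt (1 - x^2 * Real.sin u ^ 2))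
          (x * Real.sin u ^ 2 / (Real.sqrt (1 - x^2 * Real.sin u ^ 2))^3) x := by
    filter_upwards with u _ x hx
    have hxm := ballm hk0 x hx
    have hx1 : |x| < 1 := lt_trans hxm hm1
    have hpos := aux_pos u hx1
    have hne : Real.sqrt (1 - x^2 * Real.sin u ^ 2) ≠ 0 := (Real.sqrt_pos.2 hpos).ne'
    have hd : HasDerivAt (fun x : ℝ => 1 - x^2 * Real.sin u ^ 2)
        (-(2 * x ^ 1 * Real.sin u ^ 2)) x :=
      ((hasDerivAt_pow 2 x).mul_const (Real.sin u ^ 2)).const_sub 1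
    have hsqrt := hd.sqrt hpos.ne'
    have h := (hasDerivAt_const x (1:ℝ)).div hsqrt hne
    refine h.congr_deriv ?_
    have hsq : Real.sqrt (1 - x^2 * Real.sin u ^ 2) * Real.sqrt (1 - x^2 * Real.sin u ^ 2)
        = 1 - x^2 * Real.sin u ^ 2 := Real.mul_self_sqrt hpos.le
    field_simp
    ring
  have key := (intervalIntegral.hasDerivAt_integral_of_dominated_loc_of_deriv_le
    (F := fun x u => 1 / Real.sqrt (1 - x^2 * Real.sin u ^ 2))
    (F' := fun x u => x * Real.sin u ^ 2 / (Real.sqrt (1 - x^2 * Real.sin u ^ 2))^3)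
    (x₀ := k) (a := 0) (b := π/2) (μ := volume)
    (bound := fun _ => m / (Real.sqrt (1 - m^2))^3)
    (s := Metric.ball k ((1-k)/2)) (Metric.ball_mem_nhds k (by linarith)) h1 (intK hk1') h3 h4 h5 h6).2
  -- now compute the integral
  have hcontF' : Continuous (fun u => k * Real.sin u ^ 2 / (Real.sqrt (1 - k^2 * Real.sin u ^ 2))^3) := by
    apply Continuous.div (by fun_prop) (by fun_prop)
    intro u
    exact pow_ne_zero 3 (Real.sqrt_pos.2 (aux_pos u hk1')).ne'
  have hcontg : Continuous (fun u => (Real.sqrt (1 - k^2 * Real.sin u ^ 2)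
      - (1-k^2) * (1 / Real.sqrt (1 - k^2 * Real.sin u ^ 2))) / (k * (1-k^2))) := by
    apply Continuous.div ?_ continuous_const (fun _ => by positivity)
    apply Continuous.sub (by fun_prop)
    apply Continuous.mul continuous_const
    apply Continuous.div continuous_const (by fun_prop)
    intro u
    exact (Real.sqrt_pos.2 (aux_pos u hk1')).ne'
  have hzero : (∫ u in (0:ℝ)..(π/2),
      (k * Real.sin u ^ 2 / (Real.sqrt (1 - k^2 * Real.sin u ^ 2))^3
        - (Real.sqrt (1 - k^2 * Real.sin u ^ 2) - (1-k^2) * (1 / Real.sqrt (1 - k^2 * Real.sin u ^ 2)))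
          / (k * (1-k^2)))) = 0 := by
    rw [intervalIntegral.integral_eq_sub_of_hasDerivAt
      (fun u _ => phi_hasDeriv hk0 hk1' u)
      ((hcontF'.sub hcontg).intervalIntegrable 0 (π/2))]
    simp
  have heq : (∫ u in (0:ℝ)..(π/2), k * Real.sin u ^ 2 / (Real.sqrt (1 - k^2 * Real.sin u ^ 2))^3)
      = (ellE k - (1-k^2) * ellK k) / (k * (1-k^2)) := by
    have hintg : IntervalIntegrable (fun u => (Real.sqrt (1 - k^2 * Real.sin u ^ 2)
        - (1-k^2) * (1 / Real.sqrt (1 - k^2 * Real.sin u ^ 2))) / (k * (1-k^2))) volume 0 (π/2) :=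
      hcontg.intervalIntegrable 0 (π/2)
    have := intervalIntegral.integral_sub (hcontF'.intervalIntegrable 0 (π/2)) hintg
    rw [hzero] at this
    have h7 : (∫ u in (0:ℝ)..(π/2), k * Real.sin u ^ 2 / (Real.sqrt (1 - k^2 * Real.sin u ^ 2))^3)
        = ∫ u in (0:ℝ)..(π/2), (Real.sqrt (1 - k^2 * Real.sin u ^ 2)
          - (1-k^2) * (1 / Real.sqrt (1 - k^2 * Real.sin u ^ 2))) / (k * (1-k^2)) := by
      linarith [this]
    rw [h7, intervalIntegral.integral_div,
      intervalIntegral.integral_sub intE ((intK hk1').const_mul (1-k^2)),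
      intervalIntegral.integral_const_mul]
    rfl
  rw [← heq]
  exact key

lemma key_neg {k : ℝ} (hk0 : 0 < k) (hk1 : k < 1) :
    2 * ellE k - (2 - k^2) * ellK k < 0 := by
  have hk1' : |k| < 1 := by rw [abs_of_pos hk0]; exact hk1
  set f : ℝ → ℝ := fun u => Real.cos (2*u) / Real.sqrt (1 - k^2 * Real.sin u ^ 2) with hf
  have hcont : Continuous f := by
    apply Continuous.div (by fun_prop) (by fun_prop)
    intro u; exact (Real.sqrt_pos.2 (aux_pos u hk1')).ne'
  have hcont2 : Continuous (fun u => f (π/2 - u)) := hcont.comp (by fun_prop)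
  -- representation
  have hrepr : 2 * ellE k - (2 - k^2) * ellK k = k^2 * ∫ u in (0:ℝ)..(π/2), f u := by
    rw [ellE, ellK, ← intervalIntegral.integral_const_mul, ← intervalIntegral.integral_const_mul,
      ← intervalIntegral.integral_sub (intE.const_mul 2) ((intK hk1').const_mul (2-k^2)),
      ← intervalIntegral.integral_const_mul]
    apply intervalIntegral.integral_congr
    intro u _
    have hpos := aux_pos u hk1'
    have hne : Real.sqrt (1 - k^2 * Real.sin u ^ 2) ≠ 0 := (Real.sqrt_pos.2 hpos).ne'
    have hsq : Real.sqrt (1 - k^2 * Real.sin u ^ 2) * Real.sqrt (1 - k^2 * Real.sin u ^ 2)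
        = 1 - k^2 * Real.sin u ^ 2 := Real.mul_self_sqrt hpos.le
    have hcos : Real.cos (2*u) = 1 - 2 * Real.sin u ^ 2 := by
      rw [Real.cos_two_mul, Real.cos_sq']; ring
    simp only [hf, hcos]
    field_simp
    linear_combination (2:ℝ) * hsq
  have hpi : (0:ℝ) < π := Real.pi_pos
  have hint1 : IntervalIntegrable f volume 0 (π/4) := hcont.intervalIntegrable _ _
  have hint2 : IntervalIntegrable f volume (π/4) (π/2) := hcont.intervalIntegrable _ _
  have hint3 : IntervalIntegrable (fun u => f (π/2 - u)) volume 0 (π/4) :=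
    hcont2.intervalIntegrable _ _
  have hsub : (∫ u in (0:ℝ)..(π/4), f (π/2 - u)) = ∫ u in (π/4:ℝ)..(π/2), f u := by
    rw [intervalIntegral.integral_comp_sub_left f (π/2)]
    congr 1 <;> ring
  have hsplit : (∫ u in (0:ℝ)..(π/2), f u)
      = ∫ u in (0:ℝ)..(π/4), (f u + f (π/2 - u)) := by
    rw [intervalIntegral.integral_add hint1 hint3, hsub,
      intervalIntegral.integral_add_adjacent_intervals hint1 hint2]
  have hneg : (∫ u in (0:ℝ)..(π/4), (f u + f (π/2 - u))) < 0 := by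
    have hpos : (0:ℝ) < ∫ u in (0:ℝ)..(π/4), -(f u + f (π/2 - u)) := by
      apply intervalIntegral.intervalIntegral_pos_of_pos_on
      · exact ((hcont.add hcont2).neg).intervalIntegrable _ _
      · intro u hu
        obtain ⟨hu0, hu4⟩ := hu
        have h2u : Real.cos (2*u) > 0 := by
          apply Real.cos_pos_of_mem_Ioo
          constructor <;> [linarith; linarith]
        have hsin0 : 0 < Real.sin u := Real.sin_pos_of_pos_of_lt_pi hu0 (by linarith)
        have hsc : Real.sin u < Real.cos u := by
          rw [← Real.sin_pi_div_two_sub]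
          apply Real.strictMonoOn_sin ⟨by linarith, by linarith⟩ ⟨by linarith, by linarith⟩
          linarith
        have hs2 : Real.sin u ^ 2 < Real.cos u ^ 2 := by nlinarith
        have hc1 : Real.cos u ^ 2 ≤ 1 := Real.cos_sq_le_one u
        have hposc : 0 < 1 - k^2 * Real.cos u ^ 2 := by nlinarith
        have hposs : 0 < 1 - k^2 * Real.sin u ^ 2 := aux_pos u hk1'
        have hlt : 1 - k^2 * Real.cos u ^ 2 < 1 - k^2 * Real.sin u ^ 2 := by
          have := mul_pos (show (0:ℝ) < k^2 by positivity) (sub_pos.2 hs2)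
          nlinarith
        have hsqlt : Real.sqrt (1 - k^2 * Real.cos u ^ 2) < Real.sqrt (1 - k^2 * Real.sin u ^ 2) :=
          Real.sqrt_lt_sqrt hposc.le hlt
        have hsq1 : 0 < Real.sqrt (1 - k^2 * Real.cos u ^ 2) := Real.sqrt_pos.2 hposc
        have hfval : f (π/2 - u) = -Real.cos (2*u) / Real.sqrt (1 - k^2 * Real.cos u ^ 2) := by
          simp only [hf]
          rw [show 2*(π/2 - u) = π - 2*u by ring, Real.cos_pi_sub, Real.sin_pi_div_two_sub]
        rw [hfval, hf]
        have : Real.cos (2*u) / Real.sqrt (1 - k^2 * Real.sin u ^ 2)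
            < Real.cos (2*u) / Real.sqrt (1 - k^2 * Real.cos u ^ 2) := by
          apply div_lt_div_of_pos_left h2u hsq1 hsqlt
        simp only [neg_div]
        linarith
      · linarith
    rw [intervalIntegral.integral_neg] at hpos
    linarith
  rw [hrepr, hsplit]
  have : (0:ℝ) < k^2 := by positivity
  nlinarith [hneg]

lemma alg_identity {E K k c p : ℝ} (hk : k ≠ 0) (hc : 0 < c) (hp : p ≠ 0)
    (hc2 : c^2 = 1 - k^2) :
    ((-2) * ((E-K)/k + ((-(2*k^1))/(2*c) * K + c * ((E - (1-k^2)*K)/(k*(1-k^2))))) * (p*(1+c))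
      - (-2) * (E + c*K) * (p * ((-(2*k^1))/(2*c)))) / (p*(1+c))^2
    = -2 * (2*E - (2-k^2)*K) / (p*k*c*(1+c)) := by
  have hk2 : k^2 = 1 - c^2 := by linarith
  have h1c : (1:ℝ) + c ≠ 0 := by positivity
  rw [hk2]
  have hc2' : (1:ℝ) - (1 - c^2) ≠ 0 := by
    have : (1:ℝ) - (1 - c^2) = c^2 := by ring
    rw [this]; positivity
  field_simp
  linear_combination (c^2*(K-E)) * hc2

theorem stmt_0 (b : ℝ) (hb : 0 < b) :
    StrictMonoOn (fun k => kappa b k) (Set.Ioo (0:ℝ) 1) ∧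
    ∀ k ∈ Set.Ioo (0:ℝ) 1, deriv (fun k => kappa b k) k ≠ 0 := by
  have key : ∀ k ∈ Set.Ioo (0:ℝ) 1,
      HasDerivAt (fun k => kappa b k)
        (-2 * (2*ellE k - (2-k^2)*ellK k)
          / (π * b * k * Real.sqrt (1-k^2) * (1 + Real.sqrt (1-k^2)))) k := by
    rintro k ⟨hk0, hk1⟩
    have hk2pos : (0:ℝ) < 1 - k^2 := by nlinarith
    have hc0 : 0 < Real.sqrt (1-k^2) := Real.sqrt_pos.2 hk2pos
    have hc2 : Real.sqrt (1-k^2) ^ 2 = 1 - k^2 := Real.sq_sqrt hk2pos.le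
    have hE := hasDerivAt_ellE hk0 hk1
    have hK := hasDerivAt_ellK hk0 hk1
    have hc' : HasDerivAt (fun x : ℝ => Real.sqrt (1 - x^2))
        ((-(2*k^1)) / (2 * Real.sqrt (1-k^2))) k :=
      ((hasDerivAt_pow 2 k).const_sub 1).sqrt hk2pos.ne'
    have num := ((hE.add (hc'.mul hK)).const_mul (-2 : ℝ))
    have den := ((hc'.const_add 1).const_mul (π * b))
    have hdenne : π * b * (1 + Real.sqrt (1-k^2)) ≠ 0 := by positivity
    have hder := num.div den hdenne
    have hfun : (fun k => kappa b k)
        = fun x => (-2 : ℝ) * (ellE x + Real.sqrt (1 - x^2) * ellK x)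
            / (π * b * (1 + Real.sqrt (1 - x^2))) := rfl
    rw [hfun]
    refine hder.congr_deriv ?_
    simp only [Pi.add_apply, Pi.mul_apply]
    rw [show ((-2:ℝ) * ((ellE k - ellK k)/k
        + ((-(2*k^1))/(2*Real.sqrt (1-k^2)) * ellK k
          + Real.sqrt (1-k^2) * ((ellE k - (1-k^2)*ellK k)/(k*(1-k^2))))) * (π*b*(1+Real.sqrt (1-k^2)))
      - (-2:ℝ) * (ellE k + Real.sqrt (1-k^2)*ellK k) * (π*b*((-(2*k^1))/(2*Real.sqrt (1-k^2)))))
        / (π*b*(1+Real.sqrt (1-k^2)))^2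
      = -2 * (2*ellE k - (2-k^2)*ellK k) / (π*b*k*Real.sqrt (1-k^2)*(1+Real.sqrt (1-k^2)))
      from alg_identity hk0.ne' hc0 (by positivity) hc2]
  have hpos : ∀ k ∈ Set.Ioo (0:ℝ) 1,
      0 < -2 * (2*ellE k - (2-k^2)*ellK k)
        / (π * b * k * Real.sqrt (1-k^2) * (1 + Real.sqrt (1-k^2))) := by
    rintro k ⟨hk0, hk1⟩
    have hk2pos : (0:ℝ) < 1 - k^2 := by nlinarith
    have hc0 : 0 < Real.sqrt (1-k^2) := Real.sqrt_pos.2 hk2pos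
    apply div_pos
    · nlinarith [key_neg hk0 hk1]
    · have := Real.pi_pos; positivity
  constructor
  · apply strictMonoOn_of_deriv_pos (convex_Ioo 0 1)
    · intro k hk
      exact ((key k hk).differentiableAt).continuousAt.continuousWithinAt
    · intro k hk
      rw [interior_Ioo] at hk
      rw [(key k hk).deriv]
      exact hpos k hk
  · intro k hk
    rw [(key k hk).deriv]
    exact (hpos k hk).ne'
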